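/- For every reflexive digraph G, the radical equivalence of G is a subrelation of the strong equivalence of G. -/
import Mathlib


namespace DigraphHM9

/-- One step of a symmetric path: edges in both directions. -/
def SymStep {V : Type*} (E : V → V → Prop) : V → V → Prop :=
  fun u v => E u v ∧ E v u

/-- The extreme equivalence: being connected by a symmetric path. -/
def ExtremeEq {V : Type*} (E : V → V → Prop) : V → V → Prop :=
  Relation.ReflTransGen (SymStep E)

/-- The edge relation of the quotient digraph `G/ν`, pulled back to vertices:
`a → b` modulo `ν` iff some `a' ∈ a/ν` and `b' ∈ b/ν` satisfy `E a' b'`.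
For an equivalence `ν`, the `ν`-classes `A = a/ν` and `B = b/ν` satisfy `A → B`
in `G/ν` iff `SatEdge E ν a b`. -/
def SatEdge {V : Type*} (E ν : V → V → Prop) : V → V → Prop :=
  fun a b => ∃ a' b', ν a a' ∧ ν b b' ∧ E a' b'

/-- The increasing sequence `ν₀ ⊆ ν₁ ⊆ …` defining the radical equivalence:
`ν₀` is the extreme equivalence of `G`, and `νᵢ₊₁` relates `a` and `b` iff their
`νᵢ`-classes are related by the extreme equivalence of the quotient `G/νᵢ`. -/
def RadSeq {V : Type*} (E : V → V → Prop) : ℕ → (V → V → Prop)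
  | 0 => ExtremeEq E
  | (i + 1) => fun a b => RadSeq E i a b ∨ ExtremeEq (SatEdge E (RadSeq E i)) a b

/-- The radical equivalence `ν = ⋃ᵢ νᵢ`. -/
def Radical {V : Type*} (E : V → V → Prop) : V → V → Prop :=
  fun a b => ∃ i : ℕ, RadSeq E i a b

/-- The strong equivalence: directed paths both ways. -/
def StrongEq {V : Type*} (E : V → V → Prop) : V → V → Prop :=
  fun a b => Relation.ReflTransGen E a b ∧ Relation.ReflTransGen E b a

lemma strongEq_trans {V : Type*} {E : V → V → Prop} {a b c : V}
    (h1 : StrongEq E a b) (h2 : StrongEq E b c) : StrongEq E a c :=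
  ⟨h1.1.trans h2.1, h2.2.trans h1.2⟩

lemma extremeEq_subset {V : Type*} {R E : V → V → Prop}
    (h : ∀ u v, SymStep R u v → StrongEq E u v) :
    ∀ a b, ExtremeEq R a b → StrongEq E a b := by
  intro a b hab
  induction hab with
  | refl => exact ⟨.refl, .refl⟩
  | tail _ hs ih => exact strongEq_trans ih (h _ _ hs)

lemma radSeq_subset {V : Type*} (E : V → V → Prop) :
    ∀ i, ∀ a b : V, RadSeq E i a b → StrongEq E a b := by
  intro i
  induction i with
  | zero =>
    exact extremeEq_subset fun u v hs =>
      ⟨.single hs.1, .single hs.2⟩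
  | succ i ih =>
    intro a b hab
    rcases hab with h | h
    · exact ih a b h
    · refine extremeEq_subset (fun u v hs => ?_) a b h
      obtain ⟨⟨u', v', hu, hv, huv⟩, ⟨v'', u'', hv2, hu2, hvu⟩⟩ := hs
      exact ⟨((ih _ _ hu).1.trans (Relation.ReflTransGen.single huv)).trans (ih _ _ hv).2,
        ((ih _ _ hv2).1.trans (Relation.ReflTransGen.single hvu)).trans (ih _ _ hu2).2⟩

/-- For every reflexive digraph, the radical equivalence is a subrelation of the
strong equivalence. -/
theorem radical_subset_strongEq {V : Type*} (E : V → V → Prop)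
    (hrefl : ∀ v, E v v) :
    ∀ a b : V, Radical E a b → StrongEq E a b := by
  rintro a b ⟨i, h⟩
  exact radSeq_subset E i a b h

end DigraphHM9
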